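/- Let X and Y be independent finitely supported random variables on G = 𝔽₂ⁿ, let V ⊆ G be a subspace and write π = π_V. Then the fibring identity holds: s[X; Y] = s[π(X); π(Y)] + s[X | π(X); Y | π(Y)] − I[X + Y : (π(X), π(Y)) | π(X + Y)]. -/

import Mathlib

open Real Pointwise

noncomputable section

abbrev Fvec (n : ℕ) : Type := Fin n → ZMod 2

/-- Shannon entropy (natural log) of a finitely supported distribution. -/
def ent {A : Type*} (p : A → ℝ) : ℝ := ∑ᶠ a, Real.negMulLog (p a)

/-- `p` is a (finitely supported) probability distribution. -/
def IsDist {A : Type*} (p : A → ℝ) : Prop := (∀ a, 0 ≤ p a) ∧ ∑ᶠ a, p a = 1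

/-- Pushforward of a distribution along a map: the distribution of `f(X)` for `X ∼ p`. -/
def push {A B : Type*} (f : A → B) (p : A → ℝ) : B → ℝ := fun b => ∑ᶠ a ∈ f ⁻¹' {b}, p a

/-- Joint distribution of a pair of independent random variables. -/
def prodDist {A B : Type*} (p : A → ℝ) (q : B → ℝ) : A × B → ℝ := fun z => p z.1 * q z.2

/-- Distribution of `X + Y` for independent `X ∼ p`, `Y ∼ q`. -/
def conv {A : Type*} [AddGroup A] (p q : A → ℝ) : A → ℝ := fun z => ∑ᶠ x, p x * q (z - x)

/-- The distribution of `X` conditioned on `U = b`, where `r` is the joint distribution of `(X, U)`. -/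
def fiber {A B : Type*} (r : A × B → ℝ) (b : B) : A → ℝ := fun a => r (a, b) / push Prod.snd r b

/-- Conditional entropy `H[X | U]` of a joint distribution `r` of `(X, U)`. -/
def condEnt {A B : Type*} (r : A × B → ℝ) : ℝ := ∑ᶠ b, push Prod.snd r b * ent (fiber r b)

/-- Doubling mass `s[X ; Y]` (of independent copies with distributions `p`, `q`). -/
def sDouble {A : Type*} [AddGroup A] (p q : A → ℝ) : ℝ := ent p + ent q - ent (conv p q)

/-- Conditional doubling mass `s[X | U ; Y | W] = 𝔼_{u ∼ U, w ∼ W} s[X_u ; Y_w]`,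
where `r1`, `r2` are the joint distributions of `(X, U)` and `(Y, W)`. -/
def sCond {A U W : Type*} [AddGroup A] (r1 : A × U → ℝ) (r2 : A × W → ℝ) : ℝ :=
  ∑ᶠ u, ∑ᶠ w, push Prod.snd r1 u * push Prod.snd r2 w * sDouble (fiber r1 u) (fiber r2 w)

/-- Conditional mutual information `I[A : B | S]` of a joint distribution of `(A, B, S)`. -/
def condMI {A B S : Type*} (r : A × B × S → ℝ) : ℝ :=
  ent (push (fun z => (z.1, z.2.2)) r) + ent (push (fun z => z.2) r)
    - ent r - ent (push (fun z => z.2.2) r)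

/-- Uniform distribution on a set. -/
def unifOn {A : Type*} (s : Set A) : A → ℝ := s.indicator fun _ => (Nat.card s : ℝ)⁻¹

/-- Entropic Ruzsa distance `d[X ; Y]`. -/
def dRuzsa {A : Type*} [AddGroup A] (p q : A → ℝ) : ℝ := ent (conv p q) - ent p / 2 - ent q / 2

/-- Joint distribution of `(X, X + Y)` for independent `X ∼ p`, `Y ∼ q`. -/
def jointSum {A : Type*} [AddGroup A] (p q : A → ℝ) : A × A → ℝ :=
  push (fun z : A × A => (z.1, z.1 + z.2)) (prodDist p q)

/-- Joint distribution of `(X, π_V(X))`. -/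
def selfProj {n : ℕ} (V : Submodule (ZMod 2) (Fvec n)) (p : Fvec n → ℝ) :
    Fvec n × (Fvec n ⧸ V) → ℝ := push (fun x => (x, V.mkQ x)) p

/-- Joint distribution of independent `(X₁, X₂, Y₁, Y₂)` with `X₁, X₂ ∼ p` and `Y₁, Y₂ ∼ q`. -/
def quad {A : Type*} (p q : A → ℝ) : A × A × A × A → ℝ :=
  fun z => p z.1 * p z.2.1 * q z.2.2.1 * q z.2.2.2

/-- Distribution of `X₁ + ⋯ + X_k` for independent `Xᵢ ∼ p i`. -/
def indepSum {A : Type*} [AddCommGroup A] (k : ℕ) (p : Fin k → A → ℝ) : A → ℝ :=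
  push (fun x : Fin k → A => ∑ i, x i) (fun x => ∏ i, p i (x i))

/-- Statement `A(η, L, c)` from the paper. -/
def StA (η L c : ℝ) : Prop :=
  ∀ (n : ℕ) (p q : Fvec n → ℝ), IsDist p → IsDist q →
    ent (conv p q) ≤ (1 - η) * (ent p + ent q) →
    ∃ V : Submodule (ZMod 2) (Fvec n),
      ent (unifOn (V : Set (Fvec n))) ≤ L * (ent p + ent q) ∧
      ent (push V.mkQ p) + ent (push V.mkQ q) ≤ (1 - c) * (ent p + ent q)

/-- Statement `B(η, ε, L)` from the paper. -/
def StB (η ε L : ℝ) : Prop :=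
  ∀ (n : ℕ) (p q : Fvec n → ℝ), IsDist p → IsDist q →
    ∃ V : Submodule (ZMod 2) (Fvec n),
      ent (unifOn (V : Set (Fvec n))) ≤ L * (ent p + ent q) ∧
      ent (conv (push V.mkQ p) (push V.mkQ q)) ≥
        (1 - η) * (ent (push V.mkQ p) + ent (push V.mkQ q)) - ε * (ent p + ent q)


section Aux
open Finset
open scoped Classical

variable {A B C D : Type*} [Fintype A] [Fintype B] [Fintype C]

lemma ent_eq (p : A → ℝ) : ent p = ∑ a, Real.negMulLog (p a) := by
  rw [ent, finsum_eq_sum_of_fintype]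

lemma push_apply (f : A → B) (p : A → ℝ) (b : B) :
    push f p b = ∑ a, if f a = b then p a else 0 := by
  rw [push, finsum_mem_def, finsum_eq_sum_of_fintype]
  refine Finset.sum_congr rfl fun a _ => ?_
  simp [Set.indicator_apply]

lemma push_nonneg (f : A → B) (p : A → ℝ) (hp : ∀ a, 0 ≤ p a) (b : B) :
    0 ≤ push f p b := by
  rw [push_apply]
  refine Finset.sum_nonneg fun a _ => ?_
  split_ifs <;> simp [hp a]

lemma sum_push (f : A → B) (p : A → ℝ) : ∑ b, push f p b = ∑ a, p a := by
  simp only [push_apply]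
  rw [Finset.sum_comm]
  refine Finset.sum_congr rfl fun a _ => ?_
  simp

lemma push_push (f : A → B) (g : B → C) (p : A → ℝ) :
    push g (push f p) = push (g ∘ f) p := by
  funext c
  simp only [push_apply, Function.comp]
  have h : ∀ b : B, (if g b = c then ∑ a, (if f a = b then p a else 0) else 0)
      = ∑ a, if f a = b ∧ g b = c then p a else 0 := by
    intro b; split_ifs with h <;> simp [h]
  rw [Finset.sum_congr rfl fun b _ => h b, Finset.sum_comm]
  refine Finset.sum_congr rfl fun a _ => ?_
  rw [Finset.sum_eq_single (f a)]
  · simp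
  · intro b _ hb
    rw [if_neg]; rintro ⟨h1, -⟩; exact hb h1.symm
  · simp

lemma ent_push_of_injective (f : A → B) (hf : Function.Injective f) (p : A → ℝ) :
    ent (push f p) = ent p := by
  have h1 : ∀ a, push f p (f a) = p a := by
    intro a
    rw [push_apply, Finset.sum_eq_single a]
    · simp
    · intro b _ hb; rw [if_neg fun h => hb (hf h)]
    · simp
  have h2 : ∀ b, b ∉ Finset.univ.image f → push f p b = 0 := by
    intro b hb
    rw [push_apply]
    refine Finset.sum_eq_zero fun a _ => ?_
    rw [if_neg]; intro h; exact hb (Finset.mem_image.2 ⟨a, Finset.mem_univ a, h⟩)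
  rw [ent_eq, ent_eq, ← Finset.sum_subset (Finset.subset_univ (Finset.univ.image f))
    (fun b _ hb => by rw [h2 b hb, Real.negMulLog_zero]),
    Finset.sum_image (fun a _ b _ h => hf h)]
  exact Finset.sum_congr rfl fun a _ => by rw [h1]

end Aux
section Aux2
open Finset
open scoped Classical
set_option linter.unusedSectionVars false

variable {A B C D : Type*} [Fintype A] [Fintype B] [Fintype C] [Fintype D]

lemma push_prodMap (f : A → B) (g : C → D) (p : A → ℝ) (q : C → ℝ) :
    push (Prod.map f g) (prodDist p q) = prodDist (push f p) (push g q) := by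
  funext z
  obtain ⟨b, d⟩ := z
  simp only [push_apply, prodDist, Fintype.sum_prod_type]
  rw [Finset.sum_mul_sum]
  refine Finset.sum_congr rfl fun a _ => Finset.sum_congr rfl fun c _ => ?_
  simp only [Prod.map, Prod.ext_iff]
  split_ifs with h1 h2 h3 <;> simp_all

lemma conv_eq_push [AddCommGroup A] (p q : A → ℝ) :
    conv p q = push (fun z : A × A => z.1 + z.2) (prodDist p q) := by
  funext s
  rw [conv, finsum_eq_sum_of_fintype, push_apply, Fintype.sum_prod_type]
  refine Finset.sum_congr rfl fun x _ => ?_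
  rw [Finset.sum_eq_single (s - x)]
  · simp [prodDist]
  · intro y _ hy
    rw [if_neg]; intro h; exact hy (by rw [← h]; abel)
  · simp

lemma push_conv [AddCommGroup A] [AddCommGroup B] (f : A → B)
    (hf : ∀ x y, f (x + y) = f x + f y) (p q : A → ℝ) :
    push f (conv p q) = conv (push f p) (push f q) := by
  rw [conv_eq_push, conv_eq_push, push_push, ← push_prodMap, push_push]
  have h : (f ∘ fun z : A × A => z.1 + z.2)
      = (fun z : B × B => z.1 + z.2) ∘ Prod.map f f := by
    funext z; exact hf z.1 z.2
  rw [h]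

lemma push_snd_apply (r : A × B → ℝ) (b : B) :
    push Prod.snd r b = ∑ a, r (a, b) := by
  rw [push_apply, Fintype.sum_prod_type_right]
  rw [Finset.sum_eq_single b]
  · simp
  · intro b' _ hb'; refine Finset.sum_eq_zero fun a _ => if_neg ?_; simp [hb']
  · simp

lemma ent_prodDist (p : A → ℝ) (q : B → ℝ) :
    ent (prodDist p q) = (∑ b, q b) * ent p + (∑ a, p a) * ent q := by
  simp only [ent_eq, prodDist, Fintype.sum_prod_type, Real.negMulLog_mul,
    Finset.sum_add_distrib, ← Finset.sum_mul, ← Finset.mul_sum]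

lemma condEnt_eq (r : A × B → ℝ) :
    condEnt r = ∑ b, push Prod.snd r b * ent (fiber r b) := by
  rw [condEnt, finsum_eq_sum_of_fintype]

lemma chain_rule (r : A × B → ℝ) (hr : ∀ z, 0 ≤ r z) :
    ent r = ent (push Prod.snd r) + condEnt r := by
  rw [condEnt_eq, ent_eq, ent_eq, Fintype.sum_prod_type_right, ← Finset.sum_add_distrib]
  refine Finset.sum_congr rfl fun b _ => ?_
  by_cases hb : push Prod.snd r b = 0
  · have hz : ∀ a, r (a, b) = 0 := by
      intro a
      have h := (Finset.sum_eq_zero_iff_of_nonneg (fun a _ => hr (a, b))).1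
        (by rw [← push_snd_apply]; exact hb)
      exact h a (Finset.mem_univ a)
    simp [hz, hb]
  · have hsum : ∑ a, fiber r b a = 1 := by
      simp only [fiber, ← Finset.sum_div, ← push_snd_apply]
      exact div_self hb
    have key : ∀ a, r (a, b) = push Prod.snd r b * fiber r b a := by
      intro a; rw [fiber]; field_simp
    calc ∑ a, Real.negMulLog (r (a, b))
        = ∑ a, (fiber r b a * Real.negMulLog (push Prod.snd r b)
            + push Prod.snd r b * Real.negMulLog (fiber r b a)) := by
          refine Finset.sum_congr rfl fun a _ => ?_
          rw [key a, Real.negMulLog_mul]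
      _ = Real.negMulLog (push Prod.snd r b) + push Prod.snd r b * ent (fiber r b) := by
          rw [Finset.sum_add_distrib, ← Finset.sum_mul, hsum, one_mul, ent_eq,
            Finset.mul_sum]

end Aux2
section Aux3
open Finset
open scoped Classical
set_option linter.unusedSectionVars false

variable {n : ℕ} (V : Submodule (ZMod 2) (Fvec n))

instance : Fintype (Fvec n ⧸ V) := Fintype.ofFinite _

lemma selfProj_snd (p : Fvec n → ℝ) :
    push Prod.snd (selfProj V p) = push V.mkQ p := by
  rw [selfProj, push_push]; rfl

lemma ent_selfProj (p : Fvec n → ℝ) : ent (selfProj V p) = ent p :=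
  ent_push_of_injective _ (fun a b h => congrArg Prod.fst h) p

lemma selfProj_apply (p : Fvec n → ℝ) (a : Fvec n) (u : Fvec n ⧸ V) :
    selfProj V p (a, u) = if V.mkQ a = u then p a else 0 := by
  rw [selfProj, push_apply, Finset.sum_eq_single a]
  · simp [Prod.ext_iff]
    congr
  · intro b _ hb
    rw [if_neg]
    intro h
    exact hb (congrArg Prod.fst h)
  · simp

lemma fiber_selfProj (p : Fvec n → ℝ) (u : Fvec n ⧸ V) (a : Fvec n) :
    fiber (selfProj V p) u a
      = (if V.mkQ a = u then p a else 0) / push V.mkQ p u := by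
  rw [fiber, selfProj_snd, selfProj_apply]

lemma ent_chain_selfProj (p : Fvec n → ℝ) (hp : ∀ a, 0 ≤ p a) :
    ent p = ent (push V.mkQ p) + condEnt (selfProj V p) := by
  rw [← ent_selfProj V p, chain_rule _ (fun z => by
    rw [selfProj]; exact push_nonneg _ _ hp _), selfProj_snd]

variable (p q : Fvec n → ℝ)

/-- joint distribution of `(X+Y, (πX, πY))`. -/
def jointR2 : Fvec n × ((Fvec n ⧸ V) × (Fvec n ⧸ V)) → ℝ :=
  push (fun z : Fvec n × Fvec n => (z.1 + z.2, (V.mkQ z.1, V.mkQ z.2))) (prodDist p q)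

lemma jointR2_snd :
    push Prod.snd (jointR2 V p q) = prodDist (push V.mkQ p) (push V.mkQ q) := by
  rw [jointR2, push_push]
  have h : (Prod.snd ∘ fun z : Fvec n × Fvec n => (z.1 + z.2, (V.mkQ z.1, V.mkQ z.2)))
      = Prod.map V.mkQ V.mkQ := rfl
  rw [h, push_prodMap]

lemma jointR2_apply (s : Fvec n) (u w : Fvec n ⧸ V) :
    jointR2 V p q (s, (u, w))
      = ∑ x, if V.mkQ x = u ∧ V.mkQ (s - x) = w then p x * q (s - x) else 0 := by
  rw [jointR2, push_apply, Fintype.sum_prod_type]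
  refine Finset.sum_congr rfl fun x _ => ?_
  rw [Finset.sum_eq_single (s - x)]
  · have hx : x + (s - x) = s := by abel
    simp [prodDist, Prod.ext_iff, hx, and_assoc]
    congr
  · intro y _ hy
    rw [if_neg]
    intro h
    rw [Prod.mk.injEq] at h
    exact hy (by rw [← h.1]; abel)
  · simp

lemma fiber_jointR2 (u w : Fvec n ⧸ V) (hu : push V.mkQ p u ≠ 0)
    (hw : push V.mkQ q w ≠ 0) :
    fiber (jointR2 V p q) (u, w)
      = conv (fiber (selfProj V p) u) (fiber (selfProj V q) w) := by
  funext s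
  rw [fiber, jointR2_snd, jointR2_apply, conv, finsum_eq_sum_of_fintype,
    Finset.sum_div]
  refine Finset.sum_congr rfl fun x _ => ?_
  rw [fiber_selfProj, fiber_selfProj]
  simp only [prodDist]
  split_ifs <;> simp_all [div_mul_div_comm]

end Aux3
section Aux4
open Finset
open scoped Classical
set_option linter.unusedSectionVars false

variable {n : ℕ} (V : Submodule (ZMod 2) (Fvec n)) (p q : Fvec n → ℝ)

lemma condEnt_jointR2 :
    condEnt (jointR2 V p q) = ∑ u, ∑ w, push V.mkQ p u * push V.mkQ q w *
      ent (conv (fiber (selfProj V p) u) (fiber (selfProj V q) w)) := by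
  rw [condEnt_eq, Fintype.sum_prod_type]
  refine Finset.sum_congr rfl fun u _ => Finset.sum_congr rfl fun w _ => ?_
  rw [jointR2_snd]
  simp only [prodDist]
  by_cases hu : push V.mkQ p u = 0
  · simp [hu]
  by_cases hw : push V.mkQ q w = 0
  · simp [hw]
  rw [fiber_jointR2 V p q u w hu hw]

lemma sCond_eq (hp : IsDist p) (hq : IsDist q) :
    sCond (selfProj V p) (selfProj V q)
      = condEnt (selfProj V p) + condEnt (selfProj V q)
        - ∑ u, ∑ w, push V.mkQ p u * push V.mkQ q w *
            ent (conv (fiber (selfProj V p) u) (fiber (selfProj V q) w)) := by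
  have hP : ∑ u, push V.mkQ p u = 1 := by
    rw [sum_push, ← finsum_eq_sum_of_fintype]; exact hp.2
  have hQ : ∑ w, push V.mkQ q w = 1 := by
    rw [sum_push, ← finsum_eq_sum_of_fintype]; exact hq.2
  rw [sCond, finsum_eq_sum_of_fintype]
  simp only [finsum_eq_sum_of_fintype, selfProj_snd, sDouble, mul_sub, mul_add,
    Finset.sum_add_distrib, Finset.sum_sub_distrib]
  have e1 : ∑ u, ∑ w, push V.mkQ p u * push V.mkQ q w * ent (fiber (selfProj V p) u)
      = condEnt (selfProj V p) := by
    rw [condEnt_eq, selfProj_snd]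
    refine Finset.sum_congr rfl fun u _ => ?_
    rw [show ∑ w, push V.mkQ p u * push V.mkQ q w * ent (fiber (selfProj V p) u)
        = (push V.mkQ p u * ent (fiber (selfProj V p) u)) * ∑ w, push V.mkQ q w by
      rw [Finset.mul_sum]; exact Finset.sum_congr rfl fun w _ => by ring]
    rw [hQ, mul_one]
  have e2 : ∑ u, ∑ w, push V.mkQ p u * push V.mkQ q w * ent (fiber (selfProj V q) w)
      = condEnt (selfProj V q) := by
    rw [Finset.sum_comm, condEnt_eq, selfProj_snd]
    refine Finset.sum_congr rfl fun w _ => ?_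
    rw [show ∑ u, push V.mkQ p u * push V.mkQ q w * ent (fiber (selfProj V q) w)
        = (push V.mkQ q w * ent (fiber (selfProj V q) w)) * ∑ u, push V.mkQ p u by
      rw [Finset.mul_sum]; exact Finset.sum_congr rfl fun u _ => by ring]
    rw [hP, mul_one]
  rw [e1, e2]

end Aux4
open scoped Classical

/-- The fibring identity: for independent `X ∼ p`, `Y ∼ q` and `π = π_V`,
`s[X; Y] = s[π(X); π(Y)] + s[X | π(X); Y | π(Y)] − I[X+Y : (π(X), π(Y)) | π(X+Y)]`. -/
theorem statement8 (n : ℕ) (p q : Fvec n → ℝ) (hp : IsDist p) (hq : IsDist q)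
    (V : Submodule (ZMod 2) (Fvec n)) :
    sDouble p q =
      sDouble (push V.mkQ p) (push V.mkQ q) + sCond (selfProj V p) (selfProj V q) -
        condMI (push (fun z : Fvec n × Fvec n =>
          (z.1 + z.2, ((V.mkQ z.1, V.mkQ z.2), V.mkQ (z.1 + z.2)))) (prodDist p q)) := by
  have hπ : ∀ x y : Fvec n, V.mkQ (x + y) = V.mkQ x + V.mkQ y := fun x y => map_add _ x y
  have hμ : ∀ z : Fvec n × Fvec n, 0 ≤ prodDist p q z :=
    fun z => mul_nonneg (hp.1 z.1) (hq.1 z.2)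
  set F : Fvec n × Fvec n → Fvec n × (((Fvec n ⧸ V) × (Fvec n ⧸ V)) × (Fvec n ⧸ V)) :=
    fun z => (z.1 + z.2, ((V.mkQ z.1, V.mkQ z.2), V.mkQ (z.1 + z.2))) with hF
  -- component (a)
  have ha : ent (push (fun z => (z.1, z.2.2)) (push F (prodDist p q))) = ent (conv p q) := by
    rw [push_push]
    have h : ((fun z : Fvec n × (((Fvec n ⧸ V) × (Fvec n ⧸ V)) × (Fvec n ⧸ V)) =>
        (z.1, z.2.2)) ∘ F)
        = (fun s : Fvec n => (s, V.mkQ s)) ∘ (fun z : Fvec n × Fvec n => z.1 + z.2) := rfl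
    rw [h, ← push_push, ← conv_eq_push]
    exact ent_push_of_injective _ (fun a b h => congrArg Prod.fst h) _
  -- component (b)
  have hb : ent (push (fun z => z.2) (push F (prodDist p q)))
      = ent (prodDist (push V.mkQ p) (push V.mkQ q)) := by
    rw [push_push]
    have h : ((fun z : Fvec n × (((Fvec n ⧸ V) × (Fvec n ⧸ V)) × (Fvec n ⧸ V)) => z.2) ∘ F)
        = (fun w : (Fvec n ⧸ V) × (Fvec n ⧸ V) => (w, w.1 + w.2)) ∘ Prod.map V.mkQ V.mkQ := by
      funext z
      simp only [Function.comp, hF, Prod.map, hπ]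
    rw [h, ← push_push, push_prodMap]
    exact ent_push_of_injective _ (fun a b h => congrArg Prod.fst h) _
  -- component (c)
  have hc : ent (push F (prodDist p q))
      = ent (prodDist (push V.mkQ p) (push V.mkQ q)) + condEnt (jointR2 V p q) := by
    have h : F = (fun t : Fvec n × ((Fvec n ⧸ V) × (Fvec n ⧸ V)) =>
          (t.1, (t.2, t.2.1 + t.2.2)))
        ∘ (fun z : Fvec n × Fvec n => (z.1 + z.2, (V.mkQ z.1, V.mkQ z.2))) := by
      funext z
      simp only [Function.comp, hF, hπ]
    rw [h, ← push_push]
    rw [ent_push_of_injective _ (fun a b h => by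
      rw [Prod.mk.injEq, Prod.mk.injEq] at h
      exact Prod.ext h.1 h.2.1) _]
    rw [← jointR2]
    rw [chain_rule (jointR2 V p q) (fun z => push_nonneg _ _ hμ z), jointR2_snd]
  -- component (d)
  have hd : ent (push (fun z => z.2.2) (push F (prodDist p q)))
      = ent (conv (push V.mkQ p) (push V.mkQ q)) := by
    rw [push_push]
    have h : ((fun z : Fvec n × (((Fvec n ⧸ V) × (Fvec n ⧸ V)) × (Fvec n ⧸ V)) =>
        z.2.2) ∘ F) = V.mkQ ∘ (fun z : Fvec n × Fvec n => z.1 + z.2) := rfl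
    rw [h, ← push_push, ← conv_eq_push, push_conv V.mkQ hπ]
  rw [condMI, ha, hb, hc, hd, sCond_eq V p q hp hq, ← condEnt_jointR2,
    sDouble, sDouble, ent_chain_selfProj V p hp.1, ent_chain_selfProj V q hq.1]
  ring
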